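/- For every positive integer n, N ≥ 1, and partitions S₁,S₂,S₃ of n: (1/n!³) Σ_{σ₁,σ₂,σ₃∈Sₙ} χ^{S₁}(σ₁)χ^{S₂}(σ₂)χ^{S₃}(σ₃) Σ_{γ∈Sₙ} N^{c(γσ₁)+c(γσ₂)+c(γσ₃)} = n! · (Dim_N(S₁)/d(S₁)) (Dim_N(S₂)/d(S₂)) (Dim_N(S₃)/d(S₃)) · C(S₁,S₂,S₃). -/

import Mathlib

open CategoryTheory

/-- The number of cycles of `σ ∈ Sₙ`, counting fixed points as cycles of length 1. -/
def numCycles {n : ℕ} (σ : Equiv.Perm (Fin n)) : ℕ :=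
  Multiset.card σ.cycleType + (n - σ.cycleType.sum)

lemma numCycles_conj {n : ℕ} (g σ : Equiv.Perm (Fin n)) :
    numCycles (g * σ * g⁻¹) = numCycles σ := by
  unfold numCycles; rw [Equiv.Perm.cycleType_conj]

lemma finrank_ne_zero' {n : ℕ} (W : FDRep ℂ (Equiv.Perm (Fin n))) [Simple W] :
    (Module.finrank ℂ W : ℂ) ≠ 0 := by
  have h1 : (𝟙 W : W ⟶ W) ≠ 0 := CategoryTheory.id_nonzero W
  have h2 : Module.finrank ℂ W ≠ 0 := by
    intro h
    haveI : Subsingleton W := (Module.finrank_zero_iff (R := ℂ) (M := W)).mp h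
    apply h1
    have : Subsingleton (W →ₗ[ℂ] W) := inferInstance
    exact Action.Hom.ext (FGModuleCat.hom_ext (Subsingleton.elim (α := W →ₗ[ℂ] W) _ _))
  exact_mod_cast h2

lemma conv_eq {n : ℕ} (N : ℕ) (W : FDRep ℂ (Equiv.Perm (Fin n))) [Simple W]
    (γ : Equiv.Perm (Fin n)) :
    ∑ σ : Equiv.Perm (Fin n), W.character σ * (N : ℂ) ^ numCycles (γ * σ) =
      (∑ σ : Equiv.Perm (Fin n), W.character σ * (N : ℂ) ^ numCycles σ) /
          (Module.finrank ℂ W : ℂ) * W.character γ⁻¹ := by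
  set A : Module.End ℂ W := ∑ σ : Equiv.Perm (Fin n), (N : ℂ) ^ numCycles σ • (W.ρ σ) with hA
  have hcomm : ∀ g : Equiv.Perm (Fin n), A * W.ρ g = W.ρ g * A := by
    intro g
    rw [hA, Finset.sum_mul, Finset.mul_sum]
    refine Fintype.sum_equiv (MulAut.conj g⁻¹).toEquiv _ _ fun σ => ?_
    simp only [MulAut.conj_apply, MulEquiv.toEquiv_eq_coe, EquivLike.coe_coe]
    have h1 : numCycles (g⁻¹ * σ * g⁻¹⁻¹) = numCycles σ := numCycles_conj g⁻¹ σ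
    rw [h1, smul_mul_assoc, mul_smul_comm, ← map_mul, ← map_mul]
    congr 2
    group
  -- A as a morphism, hence a scalar
  have fW : W ⟶ W := Action.Hom.mk (FGModuleCat.ofHom A) (fun g => FGModuleCat.hom_ext (by ext x; exact LinearMap.congr_fun (hcomm g) x))
  obtain ⟨c, hc⟩ := CategoryTheory.endomorphism_simple_eq_smul_id ℂ
    (show W ⟶ W from Action.Hom.mk (FGModuleCat.ofHom A) (fun g => FGModuleCat.hom_ext (by ext x; exact LinearMap.congr_fun (hcomm g) x)))
  have hAc : A = c • (1 : Module.End ℂ W) := by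
    have := congrArg (fun f => f.hom.hom.hom) hc
    exact this.symm
  have htr : LinearMap.trace ℂ W A = c * (Module.finrank ℂ W : ℂ) := by
    rw [hAc, map_smul, LinearMap.trace_one]; rfl
  have htr2 : LinearMap.trace ℂ W A
      = ∑ σ : Equiv.Perm (Fin n), W.character σ * (N : ℂ) ^ numCycles σ := by
    rw [hA, map_sum]
    exact Finset.sum_congr rfl fun σ _ => by
      rw [map_smul, smul_eq_mul, mul_comm]; rfl
  have hcval : c = (∑ σ : Equiv.Perm (Fin n), W.character σ * (N : ℂ) ^ numCycles σ) /
      (Module.finrank ℂ W : ℂ) := by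
    rw [← htr2, htr]
    field_simp [finrank_ne_zero' W]
  -- now the LHS
  calc ∑ σ : Equiv.Perm (Fin n), W.character σ * (N : ℂ) ^ numCycles (γ * σ)
      = ∑ σ : Equiv.Perm (Fin n), W.character (γ⁻¹ * σ) * (N : ℂ) ^ numCycles σ := by
        refine Fintype.sum_equiv (Equiv.mulLeft γ) _ _ fun σ => ?_
        simp [mul_assoc]
    _ = ∑ σ : Equiv.Perm (Fin n), (N : ℂ) ^ numCycles σ
          • LinearMap.trace ℂ W (W.ρ γ⁻¹ * W.ρ σ) := by
        refine Finset.sum_congr rfl fun σ _ => ?_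
        rw [smul_eq_mul, mul_comm]
        congr 1
        rw [← map_mul]
        rfl
    _ = LinearMap.trace ℂ W (W.ρ γ⁻¹ * A) := by
        rw [hA, Finset.mul_sum, map_sum]
        exact Finset.sum_congr rfl fun σ _ => by rw [mul_smul_comm, map_smul]
    _ = c * W.character γ⁻¹ := by
        rw [hAc, mul_smul_comm, map_smul, smul_eq_mul]; rfl
    _ = _ := by rw [hcval]

/-- `Dim_N(R) = (1/n!) ∑_α χ^R(α) N^{c(α)}`. -/
noncomputable def dimN {n : ℕ} (V : n.Partition → FDRep ℂ (Equiv.Perm (Fin n)))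
    (N : ℕ) (R : n.Partition) : ℂ :=
  (Nat.factorial n : ℂ)⁻¹ *
    ∑ α : Equiv.Perm (Fin n), (V R).character α * (N : ℂ) ^ numCycles α

/-- The Kronecker coefficient `C(S₁,S₂,S₃)`. -/
noncomputable def kron {n : ℕ} (V : n.Partition → FDRep ℂ (Equiv.Perm (Fin n)))
    (S₁ S₂ S₃ : n.Partition) : ℂ :=
  (Nat.factorial n : ℂ)⁻¹ *
    ∑ σ : Equiv.Perm (Fin n),
      (V S₁).character σ * (V S₂).character σ * (V S₃).character σ

/-- `(1/n!³) ∑_{σ₁,σ₂,σ₃} χ^{S₁}(σ₁)χ^{S₂}(σ₂)χ^{S₃}(σ₃) ∑_γ N^{c(γσ₁)+c(γσ₂)+c(γσ₃)}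
  = n!·(Dim_N(S₁)/d(S₁))(Dim_N(S₂)/d(S₂))(Dim_N(S₃)/d(S₃))·C(S₁,S₂,S₃)`,
where the irreducible representations of `Sₙ` are labelled by the partitions of `n`
(a complete family `V` of pairwise non-isomorphic simple representations), and
`d(S) = dim V_S`. -/
theorem central_correlator (n : ℕ) (hn : 0 < n) (N : ℕ) (hN : 1 ≤ N)
    (V : n.Partition → FDRep ℂ (Equiv.Perm (Fin n)))
    (hirr : ∀ R, Simple (V R))
    (hdist : ∀ R S : n.Partition, R ≠ S → IsEmpty (V R ≅ V S))
    (hcomplete : ∀ W : FDRep ℂ (Equiv.Perm (Fin n)), Simple W → ∃ R, Nonempty (W ≅ V R))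
    (S₁ S₂ S₃ : n.Partition) :
    ((Nat.factorial n : ℂ)⁻¹) ^ 3 *
        (∑ σ₁ : Equiv.Perm (Fin n), ∑ σ₂ : Equiv.Perm (Fin n), ∑ σ₃ : Equiv.Perm (Fin n),
          (V S₁).character σ₁ * (V S₂).character σ₂ * (V S₃).character σ₃ *
            ∑ γ : Equiv.Perm (Fin n),
              (N : ℂ) ^ (numCycles (γ * σ₁) + numCycles (γ * σ₂) + numCycles (γ * σ₃))) =
      (Nat.factorial n : ℂ) *
        (dimN V N S₁ / (Module.finrank ℂ (V S₁) : ℂ)) *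
        (dimN V N S₂ / (Module.finrank ℂ (V S₂) : ℂ)) *
        (dimN V N S₃ / (Module.finrank ℂ (V S₃) : ℂ)) *
        kron V S₁ S₂ S₃ := by
  haveI := hirr S₁; haveI := hirr S₂; haveI := hirr S₃
  set G := Equiv.Perm (Fin n)
  set f₁ : G → ℂ := (V S₁).character
  set f₂ : G → ℂ := (V S₂).character
  set f₃ : G → ℂ := (V S₃).character
  set T₁ : ℂ := ∑ σ : G, f₁ σ * (N : ℂ) ^ numCycles σ with hT₁
  set T₂ : ℂ := ∑ σ : G, f₂ σ * (N : ℂ) ^ numCycles σ with hT₂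
  set T₃ : ℂ := ∑ σ : G, f₃ σ * (N : ℂ) ^ numCycles σ with hT₃
  set d₁ : ℂ := (Module.finrank ℂ (V S₁) : ℂ)
  set d₂ : ℂ := (Module.finrank ℂ (V S₂) : ℂ)
  set d₃ : ℂ := (Module.finrank ℂ (V S₃) : ℂ)
  have hfac : (Nat.factorial n : ℂ) ≠ 0 := Nat.cast_ne_zero.mpr (Nat.factorial_ne_zero n)
  have factor3 : ∀ a b c : G → ℂ,
      (∑ x : G, a x) * (∑ y : G, b y) * (∑ z : G, c z)
        = ∑ x : G, ∑ y : G, ∑ z : G, a x * b y * c z := by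
    intro a b c
    rw [Finset.sum_mul_sum, Finset.sum_mul]
    refine Finset.sum_congr rfl fun x _ => ?_
    rw [Finset.sum_mul]
    refine Finset.sum_congr rfl fun y _ => ?_
    rw [Finset.mul_sum]
  set F : G → G → G → G → ℂ := fun σ₁ σ₂ σ₃ γ =>
    (f₁ σ₁ * (N : ℂ) ^ numCycles (γ * σ₁)) * (f₂ σ₂ * (N : ℂ) ^ numCycles (γ * σ₂)) *
      (f₃ σ₃ * (N : ℂ) ^ numCycles (γ * σ₃)) with hF
  have key : (∑ σ₁ : G, ∑ σ₂ : G, ∑ σ₃ : G,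
      f₁ σ₁ * f₂ σ₂ * f₃ σ₃ *
        ∑ γ : G, (N : ℂ) ^ (numCycles (γ * σ₁) + numCycles (γ * σ₂) + numCycles (γ * σ₃)))
      = (T₁ / d₁) * (T₂ / d₂) * (T₃ / d₃) *
          ∑ γ : G, f₁ γ * f₂ γ * f₃ γ := by
    have step1 : ∀ σ₁ σ₂ σ₃ : G,
        f₁ σ₁ * f₂ σ₂ * f₃ σ₃ *
          ∑ γ : G, (N : ℂ) ^ (numCycles (γ * σ₁) + numCycles (γ * σ₂) + numCycles (γ * σ₃))
        = ∑ γ : G, F σ₁ σ₂ σ₃ γ := by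
      intro σ₁ σ₂ σ₃
      rw [hF, Finset.mul_sum]
      exact Finset.sum_congr rfl fun γ _ => by rw [pow_add, pow_add]; ring
    calc (∑ σ₁ : G, ∑ σ₂ : G, ∑ σ₃ : G,
        f₁ σ₁ * f₂ σ₂ * f₃ σ₃ *
          ∑ γ : G, (N : ℂ) ^ (numCycles (γ * σ₁) + numCycles (γ * σ₂) + numCycles (γ * σ₃)))
        = ∑ σ₁ : G, ∑ σ₂ : G, ∑ σ₃ : G, ∑ γ : G, F σ₁ σ₂ σ₃ γ := by
          simp only [step1]
      _ = ∑ σ₁ : G, ∑ σ₂ : G, ∑ γ : G, ∑ σ₃ : G, F σ₁ σ₂ σ₃ γ :=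
          Finset.sum_congr rfl fun σ₁ _ => Finset.sum_congr rfl fun σ₂ _ =>
            Finset.sum_comm
      _ = ∑ σ₁ : G, ∑ γ : G, ∑ σ₂ : G, ∑ σ₃ : G, F σ₁ σ₂ σ₃ γ :=
          Finset.sum_congr rfl fun σ₁ _ => Finset.sum_comm
      _ = ∑ γ : G, ∑ σ₁ : G, ∑ σ₂ : G, ∑ σ₃ : G, F σ₁ σ₂ σ₃ γ := Finset.sum_comm
      _ = ∑ γ : G, (∑ σ : G, f₁ σ * (N : ℂ) ^ numCycles (γ * σ)) *
            (∑ σ : G, f₂ σ * (N : ℂ) ^ numCycles (γ * σ)) *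
            (∑ σ : G, f₃ σ * (N : ℂ) ^ numCycles (γ * σ)) := by
          refine Finset.sum_congr rfl fun γ _ => ?_
          rw [hF, factor3]
      _ = ∑ γ : G, (T₁ / d₁ * f₁ γ⁻¹) * (T₂ / d₂ * f₂ γ⁻¹) * (T₃ / d₃ * f₃ γ⁻¹) := by
          refine Finset.sum_congr rfl fun γ _ => ?_
          rw [conv_eq N (V S₁) γ, conv_eq N (V S₂) γ, conv_eq N (V S₃) γ]
      _ = (T₁ / d₁) * (T₂ / d₂) * (T₃ / d₃) * ∑ γ : G, f₁ γ * f₂ γ * f₃ γ := by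
          rw [Finset.mul_sum]
          refine Fintype.sum_equiv (Equiv.inv G) _ _ fun γ => ?_
          simp only [Equiv.inv_apply]
          ring
  rw [key]
  have hd : dimN V N S₁ = (Nat.factorial n : ℂ)⁻¹ * T₁ := rfl
  have hd2 : dimN V N S₂ = (Nat.factorial n : ℂ)⁻¹ * T₂ := rfl
  have hd3 : dimN V N S₃ = (Nat.factorial n : ℂ)⁻¹ * T₃ := rfl
  have hk : kron V S₁ S₂ S₃ = (Nat.factorial n : ℂ)⁻¹ * ∑ γ : G, f₁ γ * f₂ γ * f₃ γ := rfl
  rw [hd, hd2, hd3, hk]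
  have hinv : (Nat.factorial n : ℂ) * (Nat.factorial n : ℂ)⁻¹ = 1 := mul_inv_cancel₀ hfac
  field_simp
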